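/- Let Z be a standard Normal random variable and let t be a real number. Then the total variation distance between the laws of Z and Z + t (i.e., between the Gaussian measures N(0,1) and N(t,1)) satisfies d_TV(Z, Z + t) ≤ |t| / √(2π). -/

import Mathlib

open MeasureTheory ProbabilityTheory
open scoped ENNReal

/-- Total variation distance between two measures:
the supremum over measurable sets `A` of `|μ A - ν A|`. -/
noncomputable def tvDist {χ : Type*} [MeasurableSpace χ] (μ ν : Measure χ) : ℝ :=
  ⨆ A : {s : Set χ // MeasurableSet s}, |(μ A.1).toReal - (ν A.1).toReal|

open Set

lemma gauss_shift (m x : ℝ) : gaussianPDFReal m 1 x = gaussianPDFReal 0 1 (x - m) := by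
  simp [gaussianPDFReal]

lemma gauss_le (m x : ℝ) : gaussianPDFReal m 1 x ≤ (Real.sqrt (2 * Real.pi))⁻¹ := by
  rw [gaussianPDFReal]
  simp only [NNReal.coe_one, mul_one]
  have h1 : Real.exp (-(x - m) ^ 2 / 2) ≤ 1 := by
    rw [Real.exp_le_one_iff]; nlinarith [sq_nonneg (x - m)]
  have h2 : (0:ℝ) ≤ (Real.sqrt (2 * Real.pi))⁻¹ := by positivity
  exact mul_le_of_le_one_right h2 h1

lemma gauss_apply (m : ℝ) (A : Set ℝ) :
    (gaussianReal m 1 A).toReal = ∫ x in A, gaussianPDFReal m 1 x := by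
  rw [gaussianReal_apply_eq_integral m one_ne_zero A, ENNReal.toReal_ofReal]
  exact integral_nonneg fun x => gaussianPDFReal_nonneg m 1 x

/-- main analytic estimate for `t > 0` -/
lemma aux_pos (t : ℝ) (ht : 0 < t) (A : Set ℝ) :
    (gaussianReal 0 1 A).toReal - (gaussianReal t 1 A).toReal
      ≤ t / Real.sqrt (2 * Real.pi) := by
  set f : ℝ → ℝ := gaussianPDFReal 0 1 with hf
  set g : ℝ → ℝ := gaussianPDFReal t 1 with hg
  have hfint : Integrable f := integrable_gaussianPDFReal 0 1
  have hgint : Integrable g := integrable_gaussianPDFReal t 1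
  have hdint : Integrable (fun x => f x - g x) := hfint.sub hgint
  have hsqrt : (0:ℝ) ≤ (Real.sqrt (2 * Real.pi))⁻¹ := by positivity
  -- pointwise sign comparison
  have hsign : ∀ x : ℝ, x < t/2 → 0 ≤ f x - g x := by
    intro x hx
    rw [sub_nonneg, hf, hg, gaussianPDFReal, gaussianPDFReal]
    simp only [NNReal.coe_one, mul_one]
    exact mul_le_mul_of_nonneg_left (Real.exp_le_exp.2 (by nlinarith)) hsqrt
  have hsign' : ∀ x : ℝ, t/2 ≤ x → f x - g x ≤ 0 := by
    intro x hx
    rw [sub_nonpos, hf, hg, gaussianPDFReal, gaussianPDFReal]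
    simp only [NNReal.coe_one, mul_one]
    exact mul_le_mul_of_nonneg_left (Real.exp_le_exp.2 (by nlinarith)) hsqrt
  rw [gauss_apply 0 A, gauss_apply t A, ← integral_sub (hfint.integrableOn) (hgint.integrableOn)]
  have pos_part_eq : (fun x => max (f x - g x) 0)
      = (Iio (t/2)).indicator (fun x => f x - g x) := by
    funext x
    by_cases hx : x < t/2
    · simp only [indicator_apply, mem_Iio, hx, if_true]
      exact max_eq_left (hsign x hx)
    · simp only [indicator_apply, mem_Iio, hx, if_false]
      exact max_eq_right (hsign' x (not_lt.1 hx))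
  have split : ∫ x in Iio (-(t/2)) ∪ Ico (-(t/2)) (t/2), f x
      = (∫ x in Iio (-(t/2)), f x) + ∫ x in Ico (-(t/2)) (t/2), f x :=
    setIntegral_union (by
        simp only [disjoint_left, mem_Iio, mem_Ico]
        intro a ha h2; exact absurd h2.1 (not_le.2 ha)) measurableSet_Ico
      hfint.integrableOn hfint.integrableOn
  have hunion : Iio (-(t/2)) ∪ Ico (-(t/2)) (t/2) = Iio (t/2) :=
    Iio_union_Ico_eq_Iio (by linarith)
  rw [hunion] at split
  calc ∫ x in A, (f x - g x)
      ≤ ∫ x in A, max (f x - g x) 0 := by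
        apply setIntegral_mono (hdint.integrableOn) (hdint.pos_part.integrableOn)
        intro x; exact le_max_left _ _
    _ ≤ ∫ x, max (f x - g x) 0 :=
        setIntegral_le_integral hdint.pos_part (ae_of_all _ fun x => le_max_right _ _)
    _ = ∫ x in Iio (t/2), (f x - g x) := by
        rw [pos_part_eq, integral_indicator measurableSet_Iio]
    _ = (∫ x in Iio (t/2), f x) - ∫ x in Iio (t/2), g x :=
        integral_sub hfint.integrableOn hgint.integrableOn
    _ = (∫ x in Iio (t/2), f x) - ∫ x in Iio (-(t/2)), f x := by
        congr 1
        have heq : (Iio (t/2)).indicator g = fun x => (Iio (-(t/2))).indicator f (x - t) := by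
          funext x
          by_cases hx : x < t/2
          · have hx' : x - t < -(t/2) := by linarith
            simp only [indicator_apply, mem_Iio, hx, hx', if_true]
            rw [hg, hf, gauss_shift]
          · have hx' : ¬ (x - t < -(t/2)) := by push_neg at hx ⊢; linarith
            simp only [indicator_apply, mem_Iio, hx, hx', if_false]
        rw [← integral_indicator measurableSet_Iio, ← integral_indicator measurableSet_Iio, heq,
          integral_sub_right_eq_self ((Iio (-(t/2))).indicator f) t]
    _ = ∫ x in Ico (-(t/2)) (t/2), f x := by rw [split]; ring
    _ ≤ ∫ x in Ico (-(t/2)) (t/2), (Real.sqrt (2 * Real.pi))⁻¹ := by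
        apply setIntegral_mono hfint.integrableOn (integrableOn_const (by
          rw [Real.volume_Ico]; exact ENNReal.ofReal_lt_top.ne))
        intro x; exact gauss_le 0 x
    _ = t / Real.sqrt (2 * Real.pi) := by
        rw [setIntegral_const, measureReal_def, Real.volume_Ico, smul_eq_mul,
          ENNReal.toReal_ofReal (by linarith)]
        rw [div_eq_mul_inv]; ring_nf

lemma compl_toReal (m : ℝ) {A : Set ℝ} (hA : MeasurableSet A) :
    (gaussianReal m 1 Aᶜ).toReal = 1 - (gaussianReal m 1 A).toReal := by
  rw [measure_compl hA (measure_ne_top _ _), measure_univ,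
    ENNReal.toReal_sub_of_le prob_le_one ENNReal.one_ne_top, ENNReal.toReal_one]

lemma abs_aux (t : ℝ) (ht : 0 < t) {A : Set ℝ} (hA : MeasurableSet A) :
    |(gaussianReal 0 1 A).toReal - (gaussianReal t 1 A).toReal|
      ≤ t / Real.sqrt (2 * Real.pi) := by
  rw [abs_sub_le_iff]
  refine ⟨aux_pos t ht A, ?_⟩
  have h := aux_pos t ht Aᶜ
  rw [compl_toReal 0 hA, compl_toReal t hA] at h
  linarith

lemma gauss_neg (m : ℝ) {A : Set ℝ} (hA : MeasurableSet A) :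
    gaussianReal m 1 A = gaussianReal (-m) 1 ((fun x : ℝ => -x) ⁻¹' A) := by
  have hv : (⟨(-1:ℝ)^2, sq_nonneg _⟩ : NNReal) * 1 = 1 := by ext; norm_num
  have hmap : (gaussianReal m 1).map (fun x => (-1:ℝ) * x) = gaussianReal (-m) 1 := by
    rw [gaussianReal_map_const_mul (-1)]; congr 1
    · ring
  rw [← hmap, Measure.map_apply (measurable_const_mul _) (hA.preimage measurable_neg)]
  congr 1
  ext x
  simp

/-- For `Z` standard Normal and `t ∈ ℝ`,
`d_TV(Z, Z + t) ≤ |t| / √(2π)`. -/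
theorem stmt5 (t : ℝ) :
    tvDist (gaussianReal 0 1) (gaussianReal t 1) ≤ |t| / Real.sqrt (2 * Real.pi) := by
  apply ciSup_le
  rintro ⟨A, hA⟩
  rcases lt_trichotomy t 0 with h | h | h
  · have h0 : gaussianReal 0 1 A = gaussianReal 0 1 ((fun x : ℝ => -x) ⁻¹' A) := by
      simpa using gauss_neg 0 hA
    have ht : gaussianReal t 1 A = gaussianReal (-t) 1 ((fun x : ℝ => -x) ⁻¹' A) :=
      gauss_neg t hA
    rw [h0, ht, abs_of_neg h]
    exact abs_aux (-t) (by linarith) (hA.preimage measurable_neg)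
  · subst h
    simp only [sub_self, abs_zero]
    positivity
  · rw [abs_of_pos h]
    exact abs_aux t h hA
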